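/- Let A_0 ⊆ A_1 ⊆ … ⊆ A_{n-1} be a chain of subrings of a commutative ring B, and let T_n = A_0 + A_1X + … + A_{n-1}X^{n-1} + X^nB[X]. For f = a_0 + a_1X + … + a_mX^m ∈ T_n (with m ≥ n): (i) f is a unit of T_n if and only if a_0 is a unit of A_0 and a_1, …, a_m are nilpotent in B; (ii) f is nilpotent in T_n if and only if a_0, a_1, …, a_m are all nilpotent in B. -/

import Mathlib

/-- The polynomial composite `T_n = A_0 + A_1·X + … + A_{n-1}·X^{n-1} + X^n·B[X]` attached to a
monotone chain `A : ℕ → Subring B`: the subring of `B[X]` of polynomials whose `i`-th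
coefficient lies in `A i` for every `i < n`. -/
def compositeChain {B : Type*} [CommRing B] (n : ℕ) (A : ℕ → Subring B) (hA : Monotone A) :
    Subring (Polynomial B) where
  carrier := {f : Polynomial B | ∀ i < n, f.coeff i ∈ A i}
  mul_mem' {f g} hf hg := by
    intro i hi
    rw [Polynomial.coeff_mul]
    refine sum_mem fun x hx => ?_
    rw [Finset.HasAntidiagonal.mem_antidiagonal] at hx
    have h1 : x.1 ≤ i := by omega
    have h2 : x.2 ≤ i := by omega
    exact mul_mem (hA h1 (hf x.1 (lt_of_le_of_lt h1 hi)))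
      (hA h2 (hg x.2 (lt_of_le_of_lt h2 hi)))
  one_mem' := by
    intro i hi
    rw [Polynomial.coeff_one]
    split
    · exact one_mem _
    · exact zero_mem _
  add_mem' {f g} hf hg := by
    intro i hi
    rw [Polynomial.coeff_add]
    exact add_mem (hf i hi) (hg i hi)
  zero_mem' := by
    intro i hi
    rw [Polynomial.coeff_zero]
    exact zero_mem _
  neg_mem' {f} hf := by
    intro i hi
    rw [Polynomial.coeff_neg]
    exact neg_mem (hf i hi)

theorem mem_compositeChain {B : Type*} [CommRing B] (n : ℕ) (A : ℕ → Subring B)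
    (hA : Monotone A) (f : Polynomial B) :
    f ∈ compositeChain n A hA ↔ ∀ i < n, f.coeff i ∈ A i := Iff.rfl

/-- For `f ∈ T_n = A_0 + A_1·X + … + A_{n-1}·X^{n-1} + X^n·B[X]`:
(i) `f` is a unit of `T_n` iff its constant coefficient is a unit of `A_0` and all its higher
coefficients are nilpotent in `B`; (ii) `f` is nilpotent in `T_n` iff all its coefficients are
nilpotent in `B`. -/
lemma subring_isNilpotent_of_coe {R : Type*} [CommRing R] {S : Subring R} (x : S)
    (h : IsNilpotent (x : R)) : IsNilpotent x := by
  obtain ⟨k, hk⟩ := h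
  exact ⟨k, by ext; simpa using hk⟩

theorem compositeChain_isUnit_iff_and_isNilpotent_iff {B : Type*} [CommRing B]
    (n : ℕ) (hn : 0 < n) (A : ℕ → Subring B) (hA : Monotone A)
    (f : Polynomial B) (hf : f ∈ compositeChain n A hA) :
    (IsUnit (⟨f, hf⟩ : compositeChain n A hA) ↔
      IsUnit (⟨f.coeff 0, (mem_compositeChain n A hA f).mp hf 0 hn⟩ : A 0) ∧
        ∀ i : ℕ, i ≠ 0 → IsNilpotent (f.coeff i)) ∧
    (IsNilpotent (⟨f, hf⟩ : compositeChain n A hA) ↔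
      ∀ i : ℕ, IsNilpotent (f.coeff i)) := by
  have hsub : Function.Injective (compositeChain n A hA).subtype := Subtype.coe_injective
  have hnilp : IsNilpotent (⟨f, hf⟩ : compositeChain n A hA) ↔ IsNilpotent f := by
    constructor
    · rintro ⟨k, hk⟩
      exact ⟨k, by simpa using congrArg Subtype.val hk⟩
    · exact fun h => subring_isNilpotent_of_coe _ h
  constructor
  · constructor
    · intro h
      have hfu : IsUnit f := h.map (compositeChain n A hA).subtype
      rw [Polynomial.isUnit_iff_coeff_isUnit_isNilpotent] at hfu
      refine ⟨?_, hfu.2⟩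
      obtain ⟨u, hu⟩ := h
      have hmul : f * (↑u⁻¹ : compositeChain n A hA).1 = 1 := by
        have := u.mul_inv
        rw [hu] at this
        simpa using congrArg Subtype.val this
      have hc0 : f.coeff 0 * ((↑u⁻¹ : compositeChain n A hA) : Polynomial B).coeff 0 = 1 := by
        have := congrArg (fun p => Polynomial.coeff p 0) hmul
        simpa [Polynomial.mul_coeff_zero] using this
      refine isUnit_iff_exists.mpr
        ⟨⟨((↑u⁻¹ : compositeChain n A hA) : Polynomial B).coeff 0,
          (↑u⁻¹ : compositeChain n A hA).2 0 hn⟩, ?_, ?_⟩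
      · exact Subtype.ext hc0
      · exact Subtype.ext (by rw [mul_comm] at hc0; exact hc0)
    · rintro ⟨h0, hnil⟩
      have hCmem : ∀ b : B, b ∈ A 0 → Polynomial.C b ∈ compositeChain n A hA := by
        intro b hb i hi
        rw [Polynomial.coeff_C]
        split
        · next h => subst h; exact hb
        · exact zero_mem _
      set c : compositeChain n A hA :=
        ⟨Polynomial.C (f.coeff 0), hCmem _ ((mem_compositeChain n A hA f).mp hf 0 hn)⟩ with hc
      have hcu : IsUnit c := by
        obtain ⟨b, hb1, hb2⟩ := isUnit_iff_exists.mp h0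
        refine isUnit_iff_exists.mpr ⟨⟨Polynomial.C (b : B), hCmem _ b.2⟩, ?_, ?_⟩
        · refine Subtype.ext ?_
          have : f.coeff 0 * (b : B) = 1 := congrArg Subtype.val hb1
          simp only [hc, MulMemClass.mk_mul_mk, ← Polynomial.C_mul, this, Polynomial.C_1]
          rfl
        · refine Subtype.ext ?_
          have : (b : B) * f.coeff 0 = 1 := congrArg Subtype.val hb2
          simp only [hc, MulMemClass.mk_mul_mk, ← Polynomial.C_mul, this, Polynomial.C_1]
          rfl
      have hdn : IsNilpotent ((⟨f, hf⟩ : compositeChain n A hA) - c) := by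
        apply subring_isNilpotent_of_coe
        have : (((⟨f, hf⟩ : compositeChain n A hA) - c : compositeChain n A hA) : Polynomial B)
            = f - Polynomial.C (f.coeff 0) := rfl
        rw [this, Polynomial.isNilpotent_iff]
        intro i
        rcases eq_or_ne i 0 with rfl | hi
        · simp
        · simpa [Polynomial.coeff_C, hi] using hnil i hi
      have := hdn.isUnit_add_right_of_commute hcu (Commute.all _ _)
      simpa using this
  · rw [hnilp, Polynomial.isNilpotent_iff]
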